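/- Let A = (Q, Σ̃, Γ, ⊥, q0, δ, F) be a visibly pushdown automaton, and fix linear orders on Q and Γ. With ν_A, σ0, σ1 defined via length-lexicographically minimal representative configurations, the languages S0 = σ0(D) ⊆ Q* and S1 = σ1(W∖{ε}) ⊆ (Q^Q ∪ Q)* are context-free. -/

import Mathlib

/-! Common definitions for sliding-window / visibly pushdown formalizations. -/

/-- `γ` grows polynomially: `γ(n) ∈ O(n^k)` for some `k`. -/
def GrowsPolynomially (γ : ℕ → ℕ) : Prop :=
  ∃ k C : ℕ, ∀ n : ℕ, γ n ≤ C * (n + 1) ^ k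

/-- `γ` grows exponentially: there is `c > 1` with `γ(n) ≥ c^n` for infinitely many `n`. -/
def GrowsExponentially (γ : ℕ → ℕ) : Prop :=
  ∃ c : ℝ, 1 < c ∧ ∀ m : ℕ, ∃ n : ℕ, m ≤ n ∧ c ^ n ≤ (γ n : ℝ)

/-- A set of words is suffix-closed. -/
def SuffixClosed {α : Type} (X : Set (List α)) : Prop :=
  ∀ x ∈ X, ∀ s : List α, s <:+ x → s ∈ X

/-- Domain of a partial function presented with `Option`. -/
def pdom {α β : Type} (t : List α → Option β) : Set (List α) := {x | t x ≠ none}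

/-- The `t`-growth of `X`: the number of values of `t` on words of `X` of length at most `n`. -/
noncomputable def growthOf {α : Type} {Y : Type} (t : List α → Y) (X : Set (List α)) (n : ℕ) : ℕ :=
  (t '' {x | x ∈ X ∧ x.length ≤ n}).ncard

/-- Growth of a language: number of its words of length at most `n`. -/
noncomputable def langGrowth {β : Type} (L : Set (List β)) (n : ℕ) : ℕ :=
  {y | y ∈ L ∧ y.length ≤ n}.ncard

/-- Suffix expansion of a (total or partial) function: the tuple of values on all
nonempty suffixes `a₁⋯aₙ, a₂⋯aₙ, …, aₙ` of the input. -/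
def cev {α : Type} {Y : Type} (t : List α → Y) (x : List α) : List Y :=
  x.tails.dropLast.map t

/-- Image of `X` under the partial function `t`. -/
def optImage {α β : Type} (t : List α → Option β) (X : Set (List α)) : Set β :=
  {y | ∃ x ∈ X, t x = some y}

/-- A language is bounded if it is contained in `w₁* w₂* ⋯ w_k*`. -/
def BoundedLang {β : Type} (L : Set (List β)) : Prop :=
  ∃ ws : List (List β), ∀ x ∈ L, ∃ ms : List ℕ, ms.length = ws.length ∧
    x = (List.zipWith (fun (w : List β) (m : ℕ) => (List.replicate m w).flatten) ws ms).flatten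

/-- `{u,v}*`: all concatenations of copies of `u` and `v`. -/
def UVStar {α : Type} (u v : List α) : Set (List α) :=
  {w | ∃ l : List (List α), (∀ p ∈ l, p = u ∨ p = v) ∧ w = l.flatten}

/-- `{u,v}^{≤ n}`: concatenations of at most `n` words, each equal to `u` or `v`. -/
def UVPow {α : Type} (u v : List α) (n : ℕ) : Set (List α) :=
  {w | ∃ l : List (List α), (∀ p ∈ l, p = u ∨ p = v) ∧ l.length ≤ n ∧ w = l.flatten}

/-- The set `{u₂,v₂}{u,v}* Z`. -/
def FoolingSet {α : Type} (u₂ v₂ u v : List α) (Z : Set (List α)) : Set (List α) :=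
  {x | ∃ a w z, (a = u₂ ∨ a = v₂) ∧ w ∈ UVStar u v ∧ z ∈ Z ∧ x = a ++ (w ++ z)}

/-- Linear fooling scheme for a partial function `t`. -/
def IsLinearFoolingScheme {α Y : Type} (t : List α → Option Y)
    (u₂ v₂ u v : List α) (Z : Set (List α)) : Prop :=
  u₂ <:+ u ∧ v₂ <:+ v ∧ u₂.length = v₂.length ∧
  FoolingSet u₂ v₂ u v Z ⊆ pdom t ∧
  ∃ C : ℕ, ∀ n : ℕ, ∃ z ∈ Z, z.length ≤ C * (n + 1) ∧
    ∀ w ∈ UVPow u v n, t (u₂ ++ (w ++ z)) ≠ t (v₂ ++ (w ++ z))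

/-- `X` contains a linear fooling set for `t`. -/
def ContainsLinearFoolingSet {α Y : Type} (t : List α → Option Y) (X : Set (List α)) : Prop :=
  ∃ u₂ v₂ u v Z, IsLinearFoolingScheme t u₂ v₂ u v Z ∧ FoolingSet u₂ v₂ u v Z ⊆ X

/-! ### Transducers and rational functions -/

/-- A finite-state transducer over `(α, β)` with terminal output function. -/
structure Transducer (α β : Type) where
  Q : Type
  finQ : Fintype Q
  I : Set Q
  F : Set Q
  Δ : Set (Q × List α × List β × Q)
  finΔ : Δ.Finite
  o : Q → List β

namespace Transducer

variable {α β : Type}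

/-- A run from `p` to `r` with input `x` and output `y`. -/
inductive Run (A : Transducer α β) : A.Q → List α → List β → A.Q → Prop
  | nil (q : A.Q) : Run A q [] [] q
  | cons {p q r : A.Q} {x₁ x : List α} {y₁ y : List β} :
      (p, x₁, y₁, q) ∈ A.Δ → Run A q x y r → Run A p (x₁ ++ x) (y₁ ++ y) r

/-- The transduction defined by a transducer. -/
def T (A : Transducer α β) : Set (List α × List β) :=
  {p | ∃ q₀ q y, q₀ ∈ A.I ∧ q ∈ A.F ∧ A.Run q₀ p.1 y q ∧ p.2 = y ++ A.o q}

end Transducer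

/-- A partial function is rational if its graph is the transduction of some transducer. -/
def IsRationalFun {α β : Type} (t : List α → Option (List β)) : Prop :=
  ∃ A : Transducer α β, ∀ x y, t x = some y ↔ (x, y) ∈ A.T

/-! ### Right congruences, suffix expansions, critical tuples -/

/-- A right congruence: an equivalence relation compatible with appending on the right. -/
def IsRightCongruence {α : Type} (r : List α → List α → Prop) : Prop :=
  Equivalence r ∧ ∀ x y z : List α, r x y → r (x ++ z) (y ++ z)

/-- Suffix expansion of a relation: words of the same length whose corresponding
nonempty suffixes are all related. -/
def SuffixExpansion {α : Type} (r : List α → List α → Prop) (x y : List α) : Prop :=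
  x.length = y.length ∧ ∀ i < x.length, r (x.drop i) (y.drop i)

/-- Number of `r`-classes of words of length at most `n`. -/
noncomputable def classCount {α : Type} (r : List α → List α → Prop) (n : ℕ) : ℕ :=
  Set.ncard {C : Set (List α) | ∃ x : List α, x.length ≤ n ∧ C = {y | r x y}}

/-- A relation has finite index if it has finitely many classes. -/
def FiniteIndex {α : Type} (r : List α → List α → Prop) : Prop :=
  Set.Finite {C : Set (List α) | ∃ x : List α, C = {y | r x y}}

/-- Critical tuple in a right congruence. -/
def IsCriticalTuple {α : Type} (r : List α → List α → Prop) (u₂ v₂ u v : List α) : Prop :=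
  1 ≤ u₂.length ∧ u₂.length = v₂.length ∧ u₂ <:+ u ∧ v₂ <:+ v ∧
  ∀ w ∈ UVStar u v, ¬ r (u₂ ++ w) (v₂ ++ w)

/-- The Myhill–Nerode right congruence of a language. -/
def MNrel {α : Type} (L : Set (List α)) (x y : List α) : Prop :=
  ∀ z : List α, x ++ z ∈ L ↔ y ++ z ∈ L

/-! ### Suffix distance and the canonical right congruence of a rational function -/

/-- Longest common prefix. -/
def cpre {β : Type} [DecidableEq β] : List β → List β → List β
  | a :: x, b :: y => if a = b then a :: cpre x y else []
  | _, _ => []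

/-- `‖x,y‖ = |x| + |y| − 2|x ∧ y|`, where `x ∧ y` is the longest common suffix. -/
def suffDist {β : Type} [DecidableEq β] (x y : List β) : ℕ :=
  x.length + y.length - 2 * (cpre x.reverse y.reverse).length

/-- Value of a partial function (defaulting to the empty word off the domain). -/
def pval {α β : Type} (t : List α → Option (List β)) (x : List α) : List β :=
  (t x).getD []

/-- The right congruence `R_t` of Reutenauer–Schützenberger. -/
def Rt {α β : Type} [DecidableEq β] (t : List α → Option (List β)) (u v : List α) : Prop :=
  (∀ z : List α, u ++ z ∈ pdom t ↔ v ++ z ∈ pdom t) ∧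
  Set.Finite {d : ℕ | ∃ w : List α, u ++ w ∈ pdom t ∧ v ++ w ∈ pdom t ∧
      d = suffDist (pval t (u ++ w)) (pval t (v ++ w))}

/-- Two partial functions are adjacent. -/
def Adjacent {α β : Type} [DecidableEq β] (t₁ t₂ : List α → Option (List β)) : Prop :=
  Set.Finite {d : ℕ | ∃ w : List α, w ∈ pdom t₁ ∧ w ∈ pdom t₂ ∧
      d = suffDist (pval t₁ w) (pval t₂ w)}

/-! ### Visibly pushdown automata -/

/-- Kinds of letters of a pushdown alphabet. -/
inductive VPKind : Type
  | call : VPKind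
  | ret : VPKind
  | intern : VPKind
deriving DecidableEq

/-- A visibly pushdown automaton over the pushdown alphabet determined by `pa`.
The bottom-of-stack symbol `⊥` is represented implicitly by the empty stack. -/
structure VPA (α : Type) (pa : α → VPKind) where
  Q : Type
  finQ : Fintype Q
  Γ : Type
  finΓ : Fintype Γ
  q₀ : Q
  F : Set Q
  δc : Q → α → Γ × Q
  δr : Q → α → Option Γ → Q
  δi : Q → α → Q

namespace VPA

variable {α : Type} {pa : α → VPKind}

/-- One step of the VPA on a configuration (stack with top at the head, state). -/
def step (A : VPA α pa) (c : List A.Γ × A.Q) (a : α) : List A.Γ × A.Q :=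
  match pa a with
  | VPKind.call => ((A.δc c.2 a).1 :: c.1, (A.δc c.2 a).2)
  | VPKind.intern => (c.1, A.δi c.2 a)
  | VPKind.ret =>
    match c.1 with
    | [] => ([], A.δr c.2 a none)
    | γ :: st => (st, A.δr c.2 a (some γ))

/-- Extended transition function on words. -/
def run (A : VPA α pa) (c : List A.Γ × A.Q) (w : List α) : List A.Γ × A.Q :=
  w.foldl A.step c

/-- The language accepted by a VPA (from the initial configuration `⊥q₀`). -/
def acceptsLang (A : VPA α pa) : Set (List α) :=
  {w | (A.run ([], A.q₀) w).2 ∈ A.F}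

/-- Language accepted from a configuration. -/
def AccLang (A : VPA α pa) (c : List A.Γ × A.Q) : Set (List α) :=
  {w | (A.run c w).2 ∈ A.F}

/-- The reachable configurations. -/
def rConf (A : VPA α pa) : Set (List A.Γ × A.Q) :=
  Set.range (fun w => A.run ([], A.q₀) w)

end VPA

/-- A language is a visibly pushdown language over the pushdown alphabet `pa`. -/
def IsVPL {α : Type} (pa : α → VPKind) (L : Set (List α)) : Prop :=
  ∃ A : VPA α pa, L = A.acceptsLang

/-- Well-matched words over a pushdown alphabet. -/
inductive WellMatched {α : Type} (pa : α → VPKind) : List α → Prop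
  | nil : WellMatched pa []
  | intern (a : α) : pa a = VPKind.intern → WellMatched pa [a]
  | append {u v : List α} : WellMatched pa u → WellMatched pa v → WellMatched pa (u ++ v)
  | wrap {w : List α} {a b : α} : WellMatched pa w → pa a = VPKind.call → pa b = VPKind.ret →
      WellMatched pa (a :: (w ++ [b]))

/-- Descending words: concatenations of well-matched words and return letters. -/
def Descending {α : Type} (pa : α → VPKind) (w : List α) : Prop :=
  ∃ l : List (List α),
    (∀ p ∈ l, WellMatched pa p ∨ ∃ b : α, pa b = VPKind.ret ∧ p = [b]) ∧ w = l.flatten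

/-- Length-lexicographic order on configurations `⊥αq` (stacks compared bottom-first). -/
def ConfLe {Q Γ : Type} (ltQ : LinearOrder Q) (ltΓ : LinearOrder Γ)
    (c d : List Γ × Q) : Prop :=
  c.1.length < d.1.length ∨
    (c.1.length = d.1.length ∧
      (List.Lex ltΓ.lt c.1.reverse d.1.reverse ∨ (c.1 = d.1 ∧ ltQ.le c.2 d.2)))

/-- `rep` chooses from each equivalence class of reachable configurations the
length-lexicographically least representative. -/
def IsRepFun {α : Type} {pa : α → VPKind} (A : VPA α pa)
    (ltQ : LinearOrder A.Q) (ltΓ : LinearOrder A.Γ)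
    (rep : List A.Γ × A.Q → List A.Γ × A.Q) : Prop :=
  ∀ c ∈ A.rConf, rep c ∈ A.rConf ∧ A.AccLang (rep c) = A.AccLang c ∧
    ∀ c' ∈ A.rConf, A.AccLang c' = A.AccLang c → ConfLe ltQ ltΓ (rep c) c'

/-- `ν_A(w)`: the representative of the configuration reached on `w`. -/
def nuA {α : Type} {pa : α → VPKind} (A : VPA α pa)
    (rep : List A.Γ × A.Q → List A.Γ × A.Q) (w : List α) : List A.Γ × A.Q :=
  rep (A.run ([], A.q₀) w)

/-- `σ₀(w)`: the states representing the Myhill–Nerode classes of the nonempty suffixes. -/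
def sigma0 {α : Type} {pa : α → VPKind} (A : VPA α pa)
    (rep : List A.Γ × A.Q → List A.Γ × A.Q) (w : List α) : List A.Q :=
  w.tails.dropLast.map fun s => (nuA A rep s).2

/-- `φ(w)`: the state transformation of a well-matched word. -/
def phiVPA {α : Type} {pa : α → VPKind} (A : VPA α pa) (w : List α) : A.Q → A.Q :=
  fun p => (A.run ([], p) w).2

/-- `σ₁(w) = φ(w) q₂ ⋯ qₙ`, a word over the alphabet `Q^Q ∪ Q`. -/
def sigma1 {α : Type} {pa : α → VPKind} (A : VPA α pa)
    (rep : List A.Γ × A.Q → List A.Γ × A.Q) (w : List α) : List ((A.Q → A.Q) ⊕ A.Q) :=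
  Sum.inl (phiVPA A w) :: ((sigma0 A rep w).tail.map Sum.inr)

/-! ### Real-time right transducers -/

/-- A real-time right transducer (reads its input from right to left). -/
structure RightTransducer (α β : Type) where
  Q : Type
  finQ : Fintype Q
  F : Set Q
  I : Set Q
  Δ : Set (Q × α × List β × Q)
  finΔ : Δ.Finite
  o : Q → List β

namespace RightTransducer

variable {α β : Type}

/-- Input word of a sequence of transitions. -/
def inputOf {Q : Type} (ts : List (Q × α × List β × Q)) : List α :=
  ts.map fun tr => tr.2.1

/-- Output word of a sequence of transitions. -/
def outputOf {Q : Type} (ts : List (Q × α × List β × Q)) : List β :=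
  (ts.map fun tr => tr.2.2.1).flatten

/-- `IsRunFrom A q ts p`: `ts` is a run on its input from the (rightmost) state `p`
to the (leftmost) state `q`; the transitions are listed left to right. -/
def IsRunFrom (A : RightTransducer α β) : A.Q → List (A.Q × α × List β × A.Q) → A.Q → Prop
  | q, [], p => q = p
  | q, tr :: ts, p => tr ∈ A.Δ ∧ tr.1 = q ∧ IsRunFrom A tr.2.2.2 ts p

/-- There is a run on `w` from `p` (right) to `q` (left). -/
def RunOn (A : RightTransducer α β) (q : A.Q) (w : List α) (p : A.Q) : Prop :=
  ∃ ts, A.IsRunFrom q ts p ∧ inputOf ts = w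

/-- `q ⪯ p`: there is a run from `p` to `q`. -/
def Below (A : RightTransducer α β) (q p : A.Q) : Prop :=
  ∃ w, A.RunOn q w p

/-- The partial function defined by a right transducer. -/
def Defines (A : RightTransducer α β) (t : List α → Option (List β)) : Prop :=
  ∀ x y, t x = some y ↔ ∃ p q ts, p ∈ A.F ∧ q ∈ A.I ∧ A.IsRunFrom p ts q ∧
    inputOf ts = x ∧ y = A.o p ++ outputOf ts

/-- Every state occurs on some initial accepting run. -/
def Trim (A : RightTransducer α β) : Prop :=
  ∀ s : A.Q, ∃ p q ts₁ ts₂, p ∈ A.F ∧ q ∈ A.I ∧ A.IsRunFrom p ts₁ s ∧ A.IsRunFrom s ts₂ q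

/-- Every input word has at most one initial accepting run. -/
def Unambiguous (A : RightTransducer α β) : Prop :=
  ∀ p p' q q' ts ts', p ∈ A.F → p' ∈ A.F → q ∈ A.I → q' ∈ A.I →
    A.IsRunFrom p ts q → A.IsRunFrom p' ts' q' → inputOf ts = inputOf ts' →
    p = p' ∧ ts = ts'

/-- `w` is guarded by `p`: some run on `w` from `p` stays in the SCC of `p`. -/
def Guarded (A : RightTransducer α β) (p : A.Q) (w : List α) : Prop :=
  ∃ q', A.RunOn q' w p ∧ A.Below p q'

/-- The transducer is well-behaved: the terminal outputs of guarded accepting runs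
from the same state on words of equal length coincide. -/
def WellBehaved (A : RightTransducer α β) : Prop :=
  ∀ (p q q' : A.Q) ts ts', q ∈ A.F → q' ∈ A.F →
    A.IsRunFrom q ts p → A.IsRunFrom q' ts' p →
    A.Guarded p (inputOf ts) → A.Guarded p (inputOf ts') →
    (inputOf ts).length = (inputOf ts').length →
    A.o q ++ outputOf ts = A.o q' ++ outputOf ts'

end RightTransducer

/-! ### The Parikh-like map Ψ -/

/-- `Ψ(w)`: each letter of `w` paired with its position counted from the right (1-based). -/
def Psi {α : Type} (w : List α) : Set (α × ℕ) :=
  {p | ∃ i : ℕ, w[i]? = some p.1 ∧ p.2 = w.length - i}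

/-- `Ψ(L) = ⋃_{w ∈ L} Ψ(w)`. -/
def PsiL {α : Type} (L : Set (List α)) : Set (α × ℕ) :=
  ⋃ w ∈ L, Psi w

namespace St18

variable {T N : Type}

/-- Interpretation of a single symbol as a set of terminal words. -/
def inSym (Sem : N → Set (List T)) : Symbol T N → List T → Prop
  | .terminal t, x => x = [t]
  | .nonterminal n, x => x ∈ Sem n

/-- Interpretation of a sentential form. -/
def strSem (Sem : N → Set (List T)) : List (Symbol T N) → List T → Prop
  | [], x => x = []
  | s :: rest, x => ∃ y z, inSym Sem s y ∧ strSem Sem rest z ∧ x = y ++ z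

lemma strSem_append (Sem : N → Set (List T)) :
    ∀ (u v : List (Symbol T N)) (x : List T),
      strSem Sem (u ++ v) x ↔ ∃ y z, strSem Sem u y ∧ strSem Sem v z ∧ x = y ++ z := by
  intro u
  induction u with
  | nil =>
    intro v x
    simp [strSem]
  | cons s u ih =>
    intro v x
    constructor
    · rintro ⟨y, z, hy, hz, rfl⟩
      obtain ⟨y', z', hy', hz', rfl⟩ := (ih v z).1 hz
      exact ⟨y ++ y', z', ⟨y, y', hy, hy', rfl⟩, hz', by simp⟩
    · rintro ⟨y, z, ⟨y', z', hy', hz', rfl⟩, hz, rfl⟩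
      exact ⟨y', z' ++ z, hy', (ih v _).2 ⟨z', z, hz', hz, rfl⟩, by simp⟩

lemma strSem_terminals (Sem : N → Set (List T)) :
    ∀ (w : List T) (x : List T), strSem Sem (w.map Symbol.terminal) x ↔ x = w := by
  intro w
  induction w with
  | nil => intro x; simp [strSem]
  | cons a w ih =>
    intro x
    constructor
    · rintro ⟨y, z, hy, hz, rfl⟩
      cases hy
      rw [ih] at hz
      simp [hz]
    · rintro rfl
      exact ⟨[a], w, rfl, (ih w).2 rfl, rfl⟩

lemma strSem_single_nt (Sem : N → Set (List T)) (n : N) (x : List T) :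
    strSem Sem [Symbol.nonterminal n] x ↔ x ∈ Sem n := by
  constructor
  · rintro ⟨y, z, hy, hz, rfl⟩
    cases hz
    simpa [inSym] using hy
  · intro hx
    exact ⟨x, [], hx, rfl, by simp⟩

/-- Soundness of a rule-closed semantics. -/
lemma derives_sound {g : ContextFreeGrammar T} (Sem : g.NT → Set (List T))
    (hclosed : ∀ r ∈ g.rules, ∀ x, strSem Sem r.output x → x ∈ Sem r.input)
    {u v : List (Symbol T g.NT)} (h : g.Derives u v) :
    ∀ x, strSem Sem v x → strSem Sem u x := by
  induction h with
  | refl => exact fun x hx => hx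
  | tail _ hstep ih =>
    intro x hx
    apply ih
    obtain ⟨r, hr, hrw⟩ := hstep
    obtain ⟨p, q, rfl, rfl⟩ := hrw.exists_parts
    rw [List.append_assoc] at hx ⊢
    rw [strSem_append] at hx ⊢
    obtain ⟨y, z, hy, hz, rfl⟩ := hx
    rw [strSem_append] at hz
    obtain ⟨y', z', hy', hz', rfl⟩ := hz
    refine ⟨y, y' ++ z', hy, ?_, rfl⟩
    rw [strSem_append]
    refine ⟨y', z', ?_, hz', rfl⟩
    rw [strSem_single_nt]
    exact hclosed r hr y' hy'

/-- The language of a grammar with rule-closed semantics and complete derivations. -/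
lemma language_eq_sem (g : ContextFreeGrammar T) (Sem : g.NT → Set (List T))
    (hclosed : ∀ r ∈ g.rules, ∀ x, strSem Sem r.output x → x ∈ Sem r.input)
    (hcomplete : ∀ x ∈ Sem g.initial,
      g.Derives [Symbol.nonterminal g.initial] (x.map Symbol.terminal)) :
    g.language = Sem g.initial := by
  ext x
  constructor
  · intro hx
    have := derives_sound Sem hclosed hx x ((strSem_terminals Sem x x).2 rfl)
    exact (strSem_single_nt Sem g.initial x).1 this
  · intro hx
    exact hcomplete x hx

end St18
namespace St18

variable {T N : Type} (Sem : N → Set (List T))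

lemma strSem_nil_iff (x : List T) : strSem Sem [] x ↔ x = [] := Iff.rfl

lemma strSem_single (s : Symbol T N) (x : List T) :
    strSem Sem [s] x ↔ inSym Sem s x := by
  constructor
  · rintro ⟨y, z, hy, rfl, rfl⟩
    simpa using hy
  · intro hx
    exact ⟨x, [], hx, rfl, by simp⟩

lemma strSem_pair (s₁ s₂ : Symbol T N) (x : List T) :
    strSem Sem [s₁, s₂] x ↔ ∃ y z, inSym Sem s₁ y ∧ inSym Sem s₂ z ∧ x = y ++ z := by
  constructor
  · rintro ⟨y, z, hy, ⟨y', z', hy', rfl, rfl⟩, rfl⟩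
    exact ⟨y, y', hy, hy', by simp⟩
  · rintro ⟨y, z, hy, hz, rfl⟩
    exact ⟨y, z, hy, ⟨z, [], hz, rfl, by simp⟩, rfl⟩

lemma strSem_triple (s₁ s₂ s₃ : Symbol T N) (x : List T) :
    strSem Sem [s₁, s₂, s₃] x ↔
      ∃ y z u, inSym Sem s₁ y ∧ inSym Sem s₂ z ∧ inSym Sem s₃ u ∧ x = y ++ z ++ u := by
  constructor
  · rintro ⟨y, z, hy, ⟨y', z', hy', ⟨y'', z'', hy'', rfl, rfl⟩, rfl⟩, rfl⟩
    exact ⟨y, y', y'', hy, hy', hy'', by simp⟩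
  · rintro ⟨y, z, u, hy, hz, hu, rfl⟩
    exact ⟨y, z ++ u, hy, ⟨z, u, hz, ⟨u, [], hu, rfl, by simp⟩, rfl⟩, by simp⟩

end St18
namespace St18

lemma suffix_append_split {β : Type} {s u v : List β} (h : s <:+ u ++ v) :
    s <:+ v ∨ ∃ s', s' <:+ u ∧ s = s' ++ v := by
  induction u with
  | nil => exact Or.inl h
  | cons a u ih =>
    rcases List.suffix_cons_iff.1 h with rfl | h'
    · exact Or.inr ⟨a :: u, List.suffix_refl _, rfl⟩
    · rcases ih h' with h'' | ⟨s', hs', rfl⟩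
      · exact Or.inl h''
      · exact Or.inr ⟨s', hs'.trans (List.suffix_cons a u), rfl⟩

variable {α : Type} {pa : α → VPKind} (A : VPA α pa)

lemma run_append (c : List A.Γ × A.Q) (u v : List α) :
    A.run c (u ++ v) = A.run (A.run c u) v :=
  List.foldl_append

lemma phi_def (w : List α) (p : A.Q) : phiVPA A w p = (A.run ([], p) w).2 := rfl

lemma phi_of_uniform {w : List α} {f : A.Q → A.Q}
    (e : ∀ st p, A.run (st, p) w = (st, f p)) :
    ∀ st p, A.run (st, p) w = (st, phiVPA A w p) := by
  intro st p
  rw [e st p, phi_def, e [] p]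

lemma wm_run {w : List α} (h : WellMatched pa w) :
    ∀ st p, A.run (st, p) w = (st, phiVPA A w p) := by
  induction h with
  | nil => exact phi_of_uniform A (fun st p => rfl)
  | intern a ha =>
    exact phi_of_uniform A (f := fun p => A.δi p a)
      (fun st p => by simp [VPA.run, VPA.step, ha])
  | @append u v hu hv ihu ihv =>
    exact phi_of_uniform A (fun st p => by rw [run_append, ihu, ihv])
  | @wrap m a b hm ha hb ihm =>
    refine phi_of_uniform A
      (f := fun p => A.δr (phiVPA A m (A.δc p a).2) b (some (A.δc p a).1)) (fun st p => ?_)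
    show A.run (A.step (st, p) a) (m ++ [b]) = _
    rw [run_append, VPA.step, ha]
    simp only
    rw [ihm]
    show A.step ((A.δc p a).1 :: st, phiVPA A m (A.δc p a).2) b = _
    rw [VPA.step, hb]

lemma phi_nil : phiVPA A ([] : List α) = id := rfl

lemma phi_intern {c : α} (hc : pa c = VPKind.intern) :
    phiVPA A [c] = fun p => A.δi p c := by
  funext p
  simp [phi_def, VPA.run, VPA.step, hc]

/-- Effect of a bare return letter on the empty stack. -/
def retT (b : α) : A.Q → A.Q := fun p => A.δr p b none

/-- Effect of `a m b` with `a` call, `m` well-matched of effect `μ`, `b` return. -/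
def wrapT (a : α) (μ : A.Q → A.Q) (b : α) : A.Q → A.Q :=
  fun p => A.δr (μ (A.δc p a).2) b (some (A.δc p a).1)

lemma phi_ret {b : α} (hb : pa b = VPKind.ret) : phiVPA A [b] = retT A b := by
  funext p
  simp [phi_def, VPA.run, VPA.step, hb, retT]

lemma run_ret {b : α} (hb : pa b = VPKind.ret) (p : A.Q) :
    A.run ([], p) [b] = ([], phiVPA A [b] p) := by
  rw [phi_ret A hb]
  simp [VPA.run, VPA.step, hb, retT]

lemma phi_wrap {m : List α} {a b : α} (ha : pa a = VPKind.call) (hb : pa b = VPKind.ret)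
    (hm : WellMatched pa m) :
    phiVPA A (a :: (m ++ [b])) = wrapT A a (phiVPA A m) b := by
  funext p
  rw [phi_def]
  show (A.run (A.step ([], p) a) (m ++ [b])).2 = _
  rw [run_append, VPA.step, ha]
  simp only
  rw [wm_run A hm]
  show (A.step ([(A.δc p a).1], phiVPA A m (A.δc p a).2) b).2 = _
  rw [VPA.step, hb]
  rfl

lemma desc_run {w : List α} (h : Descending pa w) :
    ∀ p, A.run ([], p) w = ([], phiVPA A w p) := by
  obtain ⟨l, hl, rfl⟩ := h
  have key : ∀ p, ∃ q, A.run ([], p) l.flatten = ([], q) := by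
    induction l with
    | nil => intro p; exact ⟨p, rfl⟩
    | cons blk l ih =>
      intro p
      have hblk := hl blk List.mem_cons_self
      have hl' : ∀ q ∈ l, WellMatched pa q ∨ ∃ b, pa b = VPKind.ret ∧ q = [b] :=
        fun q hq => hl q (List.mem_cons_of_mem _ hq)
      have ihl := ih hl'
      rcases hblk with hwm | ⟨b, hb, rfl⟩
      · obtain ⟨q, hq⟩ := ihl (phiVPA A blk p)
        refine ⟨q, ?_⟩
        show A.run ([], p) (blk ++ l.flatten) = _
        rw [run_append, wm_run A hwm]
        exact hq
      · obtain ⟨q, hq⟩ := ihl (phiVPA A [b] p)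
        refine ⟨q, ?_⟩
        show A.run ([], p) ([b] ++ l.flatten) = _
        rw [run_append, run_ret A hb]
        exact hq
  intro p
  obtain ⟨q, hq⟩ := key p
  rw [hq, phi_def, hq]

lemma phi_append_desc {u : List α} (hu : Descending pa u) (v : List α) :
    phiVPA A (u ++ v) = phiVPA A v ∘ phiVPA A u := by
  funext p
  rw [phi_def, run_append, desc_run A hu]
  rfl

/-! ### Closure properties of `Descending` -/

lemma desc_nil : Descending pa ([] : List α) := ⟨[], fun p hp => absurd hp List.not_mem_nil, rfl⟩

lemma wm_desc {w : List α} (h : WellMatched pa w) : Descending pa w := by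
  refine ⟨[w], ?_, by simp⟩
  intro p hp
  simp only [List.mem_singleton] at hp
  subst hp
  exact Or.inl h

lemma desc_ret {b : α} (hb : pa b = VPKind.ret) : Descending pa [b] := by
  refine ⟨[[b]], ?_, by simp⟩
  intro p hp
  simp only [List.mem_singleton] at hp
  subst hp
  exact Or.inr ⟨b, hb, rfl⟩

lemma desc_append {u v : List α} (hu : Descending pa u) (hv : Descending pa v) :
    Descending pa (u ++ v) := by
  obtain ⟨l, hl, rfl⟩ := hu
  obtain ⟨l', hl', rfl⟩ := hv
  exact ⟨l ++ l', fun p hp => (List.mem_append.1 hp).elim (hl p) (hl' p), by simp⟩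

lemma wm_suffix {w : List α} (h : WellMatched pa w) : ∀ s, s <:+ w → Descending pa s := by
  induction h with
  | nil =>
    intro s hs
    rw [List.suffix_nil.1 hs]
    exact desc_nil
  | intern a ha =>
    intro s hs
    rcases List.suffix_cons_iff.1 hs with rfl | hs'
    · exact wm_desc (WellMatched.intern a ha)
    · rw [List.suffix_nil.1 hs']
      exact desc_nil
  | @append u v hu hv ihu ihv =>
    intro s hs
    rcases suffix_append_split hs with hs' | ⟨s', hs', rfl⟩
    · exact ihv s hs'
    · exact desc_append (ihu s' hs') (wm_desc hv)
  | @wrap m a b hm ha hb ihm =>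
    intro s hs
    rcases List.suffix_cons_iff.1 hs with rfl | hs'
    · exact wm_desc (WellMatched.wrap hm ha hb)
    · rcases suffix_append_split hs' with hs'' | ⟨s', hs'', rfl⟩
      · rcases List.suffix_cons_iff.1 hs'' with rfl | h0
        · exact desc_ret hb
        · rw [List.suffix_nil.1 h0]; exact desc_nil
      · exact desc_append (ihm s' hs'') (desc_ret hb)

lemma desc_suffix {w : List α} (h : Descending pa w) : ∀ s, s <:+ w → Descending pa s := by
  obtain ⟨l, hl, rfl⟩ := h
  induction l with
  | nil =>
    intro s hs
    rw [List.suffix_nil.1 hs]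
    exact desc_nil
  | cons blk l ih =>
    intro s hs
    have hblk := hl blk List.mem_cons_self
    have hl' : ∀ q ∈ l, WellMatched pa q ∨ ∃ b, pa b = VPKind.ret ∧ q = [b] :=
      fun q hq => hl q (List.mem_cons_of_mem _ hq)
    have hfl : Descending pa l.flatten := ⟨l, hl', rfl⟩
    rw [show (blk :: l).flatten = blk ++ l.flatten from rfl] at hs
    rcases suffix_append_split hs with hs' | ⟨s', hs', rfl⟩
    · exact ih hl' s hs'
    · refine desc_append ?_ hfl
      rcases hblk with hwm | ⟨b, hb, rfl⟩
      · exact wm_suffix hwm s' hs'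
      · rcases List.suffix_cons_iff.1 hs' with rfl | h0
        · exact desc_ret hb
        · rw [List.suffix_nil.1 h0]; exact desc_nil

end St18
namespace St18

variable {α : Type} {pa : α → VPKind} (A : VPA α pa)
variable (rep : List A.Γ × A.Q → List A.Γ × A.Q)

/-- The state of the representative of an empty-stack configuration. -/
def fOf (p : A.Q) : A.Q := (rep ([], p)).2

/-- The relabeling underlying `σ₀`, parameterized by the effect `ρ` of the right context. -/
def outF (ρ : A.Q → A.Q) : List α → List A.Q
  | [] => []
  | a :: s => fOf A rep (ρ (phiVPA A (a :: s) A.q₀)) :: outF ρ s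

lemma outF_nil (ρ : A.Q → A.Q) : outF A rep ρ [] = [] := rfl

lemma outF_cons (ρ : A.Q → A.Q) (a : α) (s : List α) :
    outF A rep ρ (a :: s) = fOf A rep (ρ (phiVPA A (a :: s) A.q₀)) :: outF A rep ρ s := rfl

lemma outF_eq_nil_iff (ρ : A.Q → A.Q) (w : List α) : outF A rep ρ w = [] ↔ w = [] := by
  cases w <;> simp [outF]

lemma outF_singleton (ρ : A.Q → A.Q) (a : α) :
    outF A rep ρ [a] = [fOf A rep (ρ (phiVPA A [a] A.q₀))] := rfl

lemma sigma0_eq_outF {w : List α} (h : Descending pa w) :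
    sigma0 A rep w = outF A rep id w := by
  induction w with
  | nil => rfl
  | cons a s ih =>
    have hs : Descending pa s := desc_suffix h s (List.suffix_cons a s)
    have hts : s.tails ≠ [] := by cases s <;> simp
    rw [outF_cons]
    show ((a :: s).tails.dropLast.map fun t => (nuA A rep t).2) = _
    rw [List.tails_cons, List.dropLast_cons_of_ne_nil hts, List.map_cons]
    congr 1
    · show (rep (A.run ([], A.q₀) (a :: s))).2 = _
      rw [desc_run A h]
      rfl
    · exact ih hs

lemma outF_append {u : List α} (hu : Descending pa u) (v : List α) (ρ : A.Q → A.Q) :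
    outF A rep ρ (u ++ v) = outF A rep (ρ ∘ phiVPA A v) u ++ outF A rep ρ v := by
  induction u with
  | nil => rfl
  | cons a u' ih =>
    have hu' : Descending pa u' := desc_suffix hu u' (List.suffix_cons a u')
    show outF A rep ρ (a :: (u' ++ v)) = _
    rw [outF_cons, outF_cons, ih hu', List.cons_append]
    have e : phiVPA A (a :: (u' ++ v)) = phiVPA A v ∘ phiVPA A (a :: u') := by
      rw [← List.cons_append]
      exact phi_append_desc A hu v
    rw [e]
    rfl

lemma sigma1_eq {w : List α} (h : WellMatched pa w) :
    sigma1 A rep w = Sum.inl (phiVPA A w) :: ((outF A rep id w).tail.map Sum.inr) := by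
  show Sum.inl (phiVPA A w) :: ((sigma0 A rep w).tail.map Sum.inr) = _
  rw [sigma0_eq_outF A rep (wm_desc h)]

end St18
namespace St18

variable {α : Type} {pa : α → VPKind}

/-- Both grammars' "kind" predicate: well-matched for `true`, descending for `false`. -/
def GW (pa : α → VPKind) (g : Bool) (w : List α) : Prop :=
  cond g (WellMatched pa w) (Descending pa w)

lemma GW_desc {g : Bool} {w : List α} (h : GW pa g w) : Descending pa w := by
  cases g
  · exact h
  · exact wm_desc h

lemma GW_nil (g : Bool) : GW pa g ([] : List α) := by
  cases g
  · exact desc_nil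
  · exact WellMatched.nil

lemma GW_append {g : Bool} {u v : List α} (hu : GW pa g u) (hv : GW pa g v) :
    GW pa g (u ++ v) := by
  cases g
  · exact desc_append hu hv
  · exact WellMatched.append hu hv

lemma GW_intern {c : α} (hc : pa c = VPKind.intern) (g : Bool) : GW pa g [c] := by
  cases g
  · exact wm_desc (WellMatched.intern c hc)
  · exact WellMatched.intern c hc

lemma GW_wrap {m : List α} {a b : α} (hm : WellMatched pa m) (ha : pa a = VPKind.call)
    (hb : pa b = VPKind.ret) (g : Bool) : GW pa g (a :: (m ++ [b])) := by
  cases g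
  · exact wm_desc (WellMatched.wrap hm ha hb)
  · exact WellMatched.wrap hm ha hb

variable (A : VPA α pa) (rep : List A.Γ × A.Q → List A.Γ × A.Q)

lemma outF_wrap {m : List α} {a b : α} (ha : pa a = VPKind.call) (hb : pa b = VPKind.ret)
    (hm : WellMatched pa m) (ρ : A.Q → A.Q) :
    outF A rep ρ (a :: (m ++ [b])) =
      fOf A rep (ρ (wrapT A a (phiVPA A m) b A.q₀)) ::
        (outF A rep (ρ ∘ retT A b) m ++ [fOf A rep (ρ (retT A b A.q₀))]) := by
  rw [outF_cons, outF_append A rep (wm_desc hm), outF_singleton, phi_ret A hb,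
    phi_wrap A ha hb hm]

/-- Nonterminals of both grammars. -/
def NTt (A : VPA α pa) : Type := Option (Bool × (A.Q → A.Q) × (A.Q → A.Q))

/-- The rules of the grammar for `S₀ = σ₀(D)`. -/
def Rules0 : Set (ContextFreeRule A.Q (NTt A)) :=
  {r | (∃ τ : A.Q → A.Q,
          r = ⟨none, [Symbol.nonterminal (some (false, τ, id))]⟩)
     ∨ (∃ (g : Bool) (ρ : A.Q → A.Q),
          r = ⟨some (g, id, ρ), []⟩)
     ∨ (∃ (g : Bool) (τ₁ τ₂ ρ : A.Q → A.Q),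
          r = ⟨some (g, τ₂ ∘ τ₁, ρ),
            [Symbol.nonterminal (some (g, τ₁, ρ ∘ τ₂)), Symbol.nonterminal (some (g, τ₂, ρ))]⟩)
     ∨ (∃ (g : Bool) (ρ : A.Q → A.Q) (c : α), pa c = VPKind.intern ∧
          r = ⟨some (g, phiVPA A [c], ρ),
            [Symbol.terminal (fOf A rep (ρ (phiVPA A [c] A.q₀)))]⟩)
     ∨ (∃ (ρ : A.Q → A.Q) (b : α), pa b = VPKind.ret ∧
          r = ⟨some (false, phiVPA A [b], ρ),
            [Symbol.terminal (fOf A rep (ρ (phiVPA A [b] A.q₀)))]⟩)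
     ∨ (∃ (g : Bool) (ρ μ : A.Q → A.Q) (a b : α), pa a = VPKind.call ∧ pa b = VPKind.ret ∧
          r = ⟨some (g, wrapT A a μ b, ρ),
            [Symbol.terminal (fOf A rep (ρ (wrapT A a μ b A.q₀))),
             Symbol.nonterminal (some (true, μ, ρ ∘ retT A b)),
             Symbol.terminal (fOf A rep (ρ (retT A b A.q₀)))]⟩)}

lemma rules0_finite [Fintype α] : (Rules0 A rep).Finite := by
  haveI := A.finQ
  have h1 : Set.Finite (Set.range (fun τ : A.Q → A.Q =>
      (⟨none, [Symbol.nonterminal (some (false, τ, id))]⟩ : ContextFreeRule A.Q (NTt A)))) :=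
    Set.finite_range _
  have h2 : Set.Finite (Set.range (fun x : Bool × (A.Q → A.Q) =>
      (⟨some (x.1, id, x.2), []⟩ : ContextFreeRule A.Q (NTt A)))) := Set.finite_range _
  have h3 : Set.Finite (Set.range (fun x : Bool × (A.Q → A.Q) × (A.Q → A.Q) × (A.Q → A.Q) =>
      (⟨some (x.1, x.2.2.1 ∘ x.2.1, x.2.2.2),
        [Symbol.nonterminal (some (x.1, x.2.1, x.2.2.2 ∘ x.2.2.1)),
         Symbol.nonterminal (some (x.1, x.2.2.1, x.2.2.2))]⟩ :
        ContextFreeRule A.Q (NTt A)))) := Set.finite_range _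
  have h4 : Set.Finite (Set.range (fun x : Bool × (A.Q → A.Q) × α =>
      (⟨some (x.1, phiVPA A [x.2.2], x.2.1),
        [Symbol.terminal (fOf A rep (x.2.1 (phiVPA A [x.2.2] A.q₀)))]⟩ :
        ContextFreeRule A.Q (NTt A)))) := Set.finite_range _
  have h5 : Set.Finite (Set.range (fun x : (A.Q → A.Q) × α =>
      (⟨some (false, phiVPA A [x.2], x.1),
        [Symbol.terminal (fOf A rep (x.1 (phiVPA A [x.2] A.q₀)))]⟩ :
        ContextFreeRule A.Q (NTt A)))) := Set.finite_range _
  have h6 : Set.Finite (Set.range (fun x : Bool × (A.Q → A.Q) × (A.Q → A.Q) × α × α =>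
      (⟨some (x.1, wrapT A x.2.2.2.1 x.2.2.1 x.2.2.2.2, x.2.1),
        [Symbol.terminal (fOf A rep (x.2.1 (wrapT A x.2.2.2.1 x.2.2.1 x.2.2.2.2 A.q₀))),
         Symbol.nonterminal (some (true, x.2.2.1, x.2.1 ∘ retT A x.2.2.2.2)),
         Symbol.terminal (fOf A rep (x.2.1 (retT A x.2.2.2.2 A.q₀)))]⟩ :
        ContextFreeRule A.Q (NTt A)))) := Set.finite_range _
  refine Set.Finite.subset (((((h1.union h2).union h3).union h4).union h5).union h6) ?_
  rintro r (⟨τ, rfl⟩ | ⟨g, ρ, rfl⟩ | ⟨g, τ₁, τ₂, ρ, rfl⟩ | ⟨g, ρ, c, hc, rfl⟩ |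
    ⟨ρ, b, hb, rfl⟩ | ⟨g, ρ, μ, a, b, ha, hb, rfl⟩)
  · exact Or.inl (Or.inl (Or.inl (Or.inl (Or.inl ⟨τ, rfl⟩))))
  · exact Or.inl (Or.inl (Or.inl (Or.inl (Or.inr ⟨(g, ρ), rfl⟩))))
  · exact Or.inl (Or.inl (Or.inl (Or.inr ⟨(g, τ₁, τ₂, ρ), rfl⟩)))
  · exact Or.inl (Or.inl (Or.inr ⟨(g, ρ, c), rfl⟩))
  · exact Or.inl (Or.inr ⟨(ρ, b), rfl⟩)
  · exact Or.inr ⟨(g, ρ, μ, a, b), rfl⟩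

/-- The grammar for `S₀`. -/
noncomputable def G0 [Fintype α] : ContextFreeGrammar A.Q :=
  ⟨NTt A, none, (rules0_finite A rep).toFinset⟩

lemma mem_G0_rules [Fintype α] (r : ContextFreeRule A.Q (NTt A)) :
    r ∈ (G0 A rep).rules ↔ r ∈ Rules0 A rep :=
  Set.Finite.mem_toFinset _

/-- Semantics of the grammar for `S₀`. -/
def Sem0 : NTt A → Set (List A.Q)
  | none => sigma0 A rep '' {w | Descending pa w}
  | some (g, τ, ρ) => {x | ∃ w, GW pa g w ∧ phiVPA A w = τ ∧ x = outF A rep ρ w}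

end St18
namespace St18

variable {α : Type} {pa : α → VPKind} (A : VPA α pa)
variable (rep : List A.Γ × A.Q → List A.Γ × A.Q) [Fintype α]

lemma sem0_closed :
    ∀ r ∈ (G0 A rep).rules, ∀ x, strSem (Sem0 A rep) r.output x → x ∈ Sem0 A rep r.input := by
  intro r hr x hx
  replace hr := (mem_G0_rules A rep r).1 hr
  rcases hr with ⟨τ, rfl⟩ | ⟨g, ρ, rfl⟩ | ⟨g, τ₁, τ₂, ρ, rfl⟩ | ⟨g, ρ, c, hc, rfl⟩ |
    ⟨ρ, b, hb, rfl⟩ | ⟨g, ρ, μ, a, b, ha, hb, rfl⟩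
  · rw [strSem_single] at hx
    obtain ⟨w, hw, hφ, rfl⟩ := hx
    exact ⟨w, GW_desc hw, sigma0_eq_outF A rep (GW_desc hw)⟩
  · rw [strSem_nil_iff] at hx
    subst hx
    exact ⟨[], GW_nil g, phi_nil A, rfl⟩
  · rw [strSem_pair] at hx
    obtain ⟨y, z, hy, hz, rfl⟩ := hx
    obtain ⟨w₁, hw₁, hφ₁, rfl⟩ := hy
    obtain ⟨w₂, hw₂, hφ₂, rfl⟩ := hz
    refine ⟨w₁ ++ w₂, GW_append hw₁ hw₂, ?_, ?_⟩
    · rw [phi_append_desc A (GW_desc hw₁), hφ₁, hφ₂]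
    · rw [outF_append A rep (GW_desc hw₁), hφ₂]
  · rw [strSem_single] at hx
    rw [show inSym (Sem0 A rep) (Symbol.terminal (fOf A rep (ρ (phiVPA A [c] A.q₀)))) x =
      (x = [fOf A rep (ρ (phiVPA A [c] A.q₀))]) from rfl] at hx
    subst hx
    exact ⟨[c], GW_intern hc g, rfl, rfl⟩
  · rw [strSem_single] at hx
    rw [show inSym (Sem0 A rep) (Symbol.terminal (fOf A rep (ρ (phiVPA A [b] A.q₀)))) x =
      (x = [fOf A rep (ρ (phiVPA A [b] A.q₀))]) from rfl] at hx
    subst hx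
    exact ⟨[b], desc_ret hb, rfl, rfl⟩
  · rw [strSem_triple] at hx
    obtain ⟨y, z, u, hy, hz, hu, rfl⟩ := hx
    rw [show inSym (Sem0 A rep) (Symbol.terminal (fOf A rep (ρ (wrapT A a μ b A.q₀)))) y =
      (y = [fOf A rep (ρ (wrapT A a μ b A.q₀))]) from rfl] at hy
    rw [show inSym (Sem0 A rep) (Symbol.terminal (fOf A rep (ρ (retT A b A.q₀)))) u =
      (u = [fOf A rep (ρ (retT A b A.q₀))]) from rfl] at hu
    subst hy; subst hu
    obtain ⟨m, hm, hφm, rfl⟩ := hz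
    refine ⟨a :: (m ++ [b]), GW_wrap hm ha hb g, ?_, ?_⟩
    · rw [phi_wrap A ha hb hm, hφm]
    · rw [outF_wrap A rep ha hb hm, hφm]
      simp

lemma produces0 {r : ContextFreeRule A.Q (NTt A)} (hr : r ∈ Rules0 A rep) :
    (G0 A rep).Produces [Symbol.nonterminal r.input] r.output :=
  ⟨r, (mem_G0_rules A rep r).2 hr, ContextFreeRule.Rewrites.input_output⟩

lemma derive_M {m : List α} (hm : WellMatched pa m) :
    ∀ (g : Bool) (ρ : A.Q → A.Q),
      (G0 A rep).Derives [Symbol.nonterminal (some (g, phiVPA A m, ρ))]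
        ((outF A rep ρ m).map Symbol.terminal) := by
  induction hm with
  | nil =>
    intro g ρ
    rw [phi_nil A]
    exact (produces0 A rep (r := ⟨some (g, id, ρ), []⟩)
      (Or.inr (Or.inl ⟨g, ρ, rfl⟩))).single
  | intern c hc =>
    intro g ρ
    exact (produces0 A rep
      (r := ⟨some (g, phiVPA A [c], ρ), [Symbol.terminal (fOf A rep (ρ (phiVPA A [c] A.q₀)))]⟩)
      (Or.inr (Or.inr (Or.inr (Or.inl ⟨g, ρ, c, hc, rfl⟩))))).single
  | @append u v hu hv ihu ihv =>
    intro g ρ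
    rw [phi_append_desc A (wm_desc hu)]
    have step := produces0 A rep
      (r := ⟨some (g, phiVPA A v ∘ phiVPA A u, ρ),
        [Symbol.nonterminal (some (g, phiVPA A u, ρ ∘ phiVPA A v)),
         Symbol.nonterminal (some (g, phiVPA A v, ρ))]⟩)
      (Or.inr (Or.inr (Or.inl ⟨g, phiVPA A u, phiVPA A v, ρ, rfl⟩)))
    refine step.trans_derives ?_
    rw [outF_append A rep (wm_desc hu), List.map_append]
    have d1 := (ihu g (ρ ∘ phiVPA A v)).append_right
      [Symbol.nonterminal (some (g, phiVPA A v, ρ))]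
    have d2 := (ihv g ρ).append_left ((outF A rep (ρ ∘ phiVPA A v) u).map Symbol.terminal)
    exact d1.trans d2
  | @wrap m a b hm' ha hb ihm =>
    intro g ρ
    rw [phi_wrap A ha hb hm']
    have step := produces0 A rep
      (r := ⟨some (g, wrapT A a (phiVPA A m) b, ρ),
        [Symbol.terminal (fOf A rep (ρ (wrapT A a (phiVPA A m) b A.q₀))),
         Symbol.nonterminal (some (true, phiVPA A m, ρ ∘ retT A b)),
         Symbol.terminal (fOf A rep (ρ (retT A b A.q₀)))]⟩)
      (Or.inr (Or.inr (Or.inr (Or.inr (Or.inr ⟨g, ρ, phiVPA A m, a, b, ha, hb, rfl⟩)))))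
    refine step.trans_derives ?_
    rw [outF_wrap A rep ha hb hm']
    have d := ihm true (ρ ∘ retT A b)
    have d2 := (d.append_right
      [Symbol.terminal (fOf A rep (ρ (retT A b A.q₀)))]).append_left
      [Symbol.terminal (fOf A rep (ρ (wrapT A a (phiVPA A m) b A.q₀)))]
    simp at d2 ⊢; exact d2
  
lemma derive_D_aux :
    ∀ (l : List (List α)),
      (∀ p ∈ l, WellMatched pa p ∨ ∃ b, pa b = VPKind.ret ∧ p = [b]) →
      ∀ ρ : A.Q → A.Q,
        (G0 A rep).Derives [Symbol.nonterminal (some (false, phiVPA A l.flatten, ρ))]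
          ((outF A rep ρ l.flatten).map Symbol.terminal) := by
  intro l
  induction l with
  | nil =>
    intro _ ρ
    rw [show ([] : List (List α)).flatten = [] from rfl, phi_nil A]
    exact (produces0 A rep (r := ⟨some (false, id, ρ), []⟩)
      (Or.inr (Or.inl ⟨false, ρ, rfl⟩))).single
  | cons blk l ih =>
    intro hl ρ
    have hblk := hl blk List.mem_cons_self
    have hl' : ∀ q ∈ l, WellMatched pa q ∨ ∃ b, pa b = VPKind.ret ∧ q = [b] :=
      fun q hq => hl q (List.mem_cons_of_mem _ hq)
    have hdblk : Descending pa blk := by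
      rcases hblk with hwm | ⟨b, hb, rfl⟩
      · exact wm_desc hwm
      · exact desc_ret hb
    show (G0 A rep).Derives
      [Symbol.nonterminal (some (false, phiVPA A (blk ++ l.flatten), ρ))]
      ((outF A rep ρ (blk ++ l.flatten)).map Symbol.terminal)
    rw [phi_append_desc A hdblk]
    have step := produces0 A rep
      (r := ⟨some (false, phiVPA A l.flatten ∘ phiVPA A blk, ρ),
        [Symbol.nonterminal (some (false, phiVPA A blk, ρ ∘ phiVPA A l.flatten)),
         Symbol.nonterminal (some (false, phiVPA A l.flatten, ρ))]⟩)
      (Or.inr (Or.inr (Or.inl ⟨false, phiVPA A blk, phiVPA A l.flatten, ρ, rfl⟩)))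
    refine step.trans_derives ?_
    rw [outF_append A rep hdblk, List.map_append]
    have d1 : (G0 A rep).Derives
        [Symbol.nonterminal (some (false, phiVPA A blk, ρ ∘ phiVPA A l.flatten))]
        ((outF A rep (ρ ∘ phiVPA A l.flatten) blk).map Symbol.terminal) := by
      rcases hblk with hwm | ⟨b, hb, rfl⟩
      · exact derive_M A rep hwm false (ρ ∘ phiVPA A l.flatten)
      · exact (produces0 A rep
          (r := ⟨some (false, phiVPA A [b], ρ ∘ phiVPA A l.flatten),
            [Symbol.terminal (fOf A rep ((ρ ∘ phiVPA A l.flatten) (phiVPA A [b] A.q₀)))]⟩)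
          (Or.inr (Or.inr (Or.inr (Or.inr (Or.inl ⟨ρ ∘ phiVPA A l.flatten, b, hb, rfl⟩)))))).single
    have d2 := (ih hl' ρ).append_left
      ((outF A rep (ρ ∘ phiVPA A l.flatten) blk).map Symbol.terminal)
    exact (d1.append_right [Symbol.nonterminal (some (false, phiVPA A l.flatten, ρ))]).trans d2

lemma G0_lang : (G0 A rep).language = sigma0 A rep '' {w | Descending pa w} := by
  refine language_eq_sem (G0 A rep) (Sem0 A rep) (sem0_closed A rep) ?_
  rintro x ⟨w, hw, rfl⟩
  rw [sigma0_eq_outF A rep hw]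
  have step := produces0 A rep
    (r := ⟨none, [Symbol.nonterminal (some (false, phiVPA A w, id))]⟩)
    (Or.inl ⟨phiVPA A w, rfl⟩)
  refine step.trans_derives ?_
  obtain ⟨l, hl, rfl⟩ := hw
  exact derive_D_aux A rep l hl id

end St18
namespace St18

variable {α : Type} {pa : α → VPKind} (A : VPA α pa)
variable (rep : List A.Γ × A.Q → List A.Γ × A.Q)

lemma outF_ne_nil {w : List α} (hw : w ≠ []) (ρ : A.Q → A.Q) : outF A rep ρ w ≠ [] :=
  fun h => hw ((outF_eq_nil_iff A rep ρ w).1 h)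

lemma outF_tail_append {u : List α} (hu : Descending pa u) (hune : u ≠ []) (v : List α)
    (ρ : A.Q → A.Q) :
    (outF A rep ρ (u ++ v)).tail =
      (outF A rep (ρ ∘ phiVPA A v) u).tail ++ outF A rep ρ v := by
  rw [outF_append A rep hu, List.tail_append_of_ne_nil (outF_ne_nil A rep hune _)]

/-- The terminal alphabet of the grammar for `S₁`. -/
abbrev T1 := (A.Q → A.Q) ⊕ A.Q

/-- The rules of the grammar for `S₁`. -/
def Rules1 : Set (ContextFreeRule (T1 A) (NTt A)) :=
  {r | (∃ μ : A.Q → A.Q,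
          r = ⟨none, [Symbol.terminal (Sum.inl μ),
                      Symbol.nonterminal (some (true, μ, id))]⟩)
     ∨ (∃ ρ : A.Q → A.Q,
          r = ⟨some (false, id, ρ), []⟩)
     ∨ (∃ μ₁ μ₂ ρ : A.Q → A.Q,
          r = ⟨some (false, μ₂ ∘ μ₁, ρ),
            [Symbol.nonterminal (some (false, μ₁, ρ ∘ μ₂)),
             Symbol.nonterminal (some (false, μ₂, ρ))]⟩)
     ∨ (∃ (ρ : A.Q → A.Q) (c : α), pa c = VPKind.intern ∧
          r = ⟨some (false, phiVPA A [c], ρ),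
            [Symbol.terminal (Sum.inr (fOf A rep (ρ (phiVPA A [c] A.q₀))))]⟩)
     ∨ (∃ (ρ μ : A.Q → A.Q) (a b : α), pa a = VPKind.call ∧ pa b = VPKind.ret ∧
          r = ⟨some (false, wrapT A a μ b, ρ),
            [Symbol.terminal (Sum.inr (fOf A rep (ρ (wrapT A a μ b A.q₀)))),
             Symbol.nonterminal (some (false, μ, ρ ∘ retT A b)),
             Symbol.terminal (Sum.inr (fOf A rep (ρ (retT A b A.q₀))))]⟩)
     ∨ (∃ (ρ : A.Q → A.Q) (c : α), pa c = VPKind.intern ∧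
          r = ⟨some (true, phiVPA A [c], ρ), []⟩)
     ∨ (∃ (ρ μ : A.Q → A.Q) (a b : α), pa a = VPKind.call ∧ pa b = VPKind.ret ∧
          r = ⟨some (true, wrapT A a μ b, ρ),
            [Symbol.nonterminal (some (false, μ, ρ ∘ retT A b)),
             Symbol.terminal (Sum.inr (fOf A rep (ρ (retT A b A.q₀))))]⟩)
     ∨ (∃ μ₁ μ₂ ρ : A.Q → A.Q,
          r = ⟨some (true, μ₂ ∘ μ₁, ρ),
            [Symbol.nonterminal (some (true, μ₁, ρ ∘ μ₂)),
             Symbol.nonterminal (some (false, μ₂, ρ))]⟩)}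

lemma rules1_finite [Fintype α] : (Rules1 A rep).Finite := by
  haveI := A.finQ
  have h1 := Set.finite_range (fun μ : A.Q → A.Q =>
      (⟨none, [Symbol.terminal (Sum.inl μ), Symbol.nonterminal (some (true, μ, id))]⟩ :
        ContextFreeRule (T1 A) (NTt A)))
  have h2 := Set.finite_range (fun ρ : A.Q → A.Q =>
      (⟨some (false, id, ρ), []⟩ : ContextFreeRule (T1 A) (NTt A)))
  have h3 := Set.finite_range (fun x : (A.Q → A.Q) × (A.Q → A.Q) × (A.Q → A.Q) =>
      (⟨some (false, x.2.1 ∘ x.1, x.2.2),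
        [Symbol.nonterminal (some (false, x.1, x.2.2 ∘ x.2.1)),
         Symbol.nonterminal (some (false, x.2.1, x.2.2))]⟩ :
        ContextFreeRule (T1 A) (NTt A)))
  have h4 := Set.finite_range (fun x : (A.Q → A.Q) × α =>
      (⟨some (false, phiVPA A [x.2], x.1),
        [Symbol.terminal (Sum.inr (fOf A rep (x.1 (phiVPA A [x.2] A.q₀))))]⟩ :
        ContextFreeRule (T1 A) (NTt A)))
  have h5 := Set.finite_range (fun x : (A.Q → A.Q) × (A.Q → A.Q) × α × α =>
      (⟨some (false, wrapT A x.2.2.1 x.2.1 x.2.2.2, x.1),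
        [Symbol.terminal (Sum.inr (fOf A rep (x.1 (wrapT A x.2.2.1 x.2.1 x.2.2.2 A.q₀)))),
         Symbol.nonterminal (some (false, x.2.1, x.1 ∘ retT A x.2.2.2)),
         Symbol.terminal (Sum.inr (fOf A rep (x.1 (retT A x.2.2.2 A.q₀))))]⟩ :
        ContextFreeRule (T1 A) (NTt A)))
  have h6 := Set.finite_range (fun x : (A.Q → A.Q) × α =>
      (⟨some (true, phiVPA A [x.2], x.1), []⟩ : ContextFreeRule (T1 A) (NTt A)))
  have h7 := Set.finite_range (fun x : (A.Q → A.Q) × (A.Q → A.Q) × α × α =>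
      (⟨some (true, wrapT A x.2.2.1 x.2.1 x.2.2.2, x.1),
        [Symbol.nonterminal (some (false, x.2.1, x.1 ∘ retT A x.2.2.2)),
         Symbol.terminal (Sum.inr (fOf A rep (x.1 (retT A x.2.2.2 A.q₀))))]⟩ :
        ContextFreeRule (T1 A) (NTt A)))
  have h8 := Set.finite_range (fun x : (A.Q → A.Q) × (A.Q → A.Q) × (A.Q → A.Q) =>
      (⟨some (true, x.2.1 ∘ x.1, x.2.2),
        [Symbol.nonterminal (some (true, x.1, x.2.2 ∘ x.2.1)),
         Symbol.nonterminal (some (false, x.2.1, x.2.2))]⟩ :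
        ContextFreeRule (T1 A) (NTt A)))
  refine Set.Finite.subset
    (((((((h1.union h2).union h3).union h4).union h5).union h6).union h7).union h8) ?_
  rintro r (⟨μ, rfl⟩ | ⟨ρ, rfl⟩ | ⟨μ₁, μ₂, ρ, rfl⟩ | ⟨ρ, c, hc, rfl⟩ |
    ⟨ρ, μ, a, b, ha, hb, rfl⟩ | ⟨ρ, c, hc, rfl⟩ | ⟨ρ, μ, a, b, ha, hb, rfl⟩ | ⟨μ₁, μ₂, ρ, rfl⟩)
  · exact Or.inl (Or.inl (Or.inl (Or.inl (Or.inl (Or.inl (Or.inl ⟨μ, rfl⟩))))))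
  · exact Or.inl (Or.inl (Or.inl (Or.inl (Or.inl (Or.inl (Or.inr ⟨ρ, rfl⟩))))))
  · exact Or.inl (Or.inl (Or.inl (Or.inl (Or.inl (Or.inr ⟨(μ₁, μ₂, ρ), rfl⟩)))))
  · exact Or.inl (Or.inl (Or.inl (Or.inl (Or.inr ⟨(ρ, c), rfl⟩))))
  · exact Or.inl (Or.inl (Or.inl (Or.inr ⟨(ρ, μ, a, b), rfl⟩)))
  · exact Or.inl (Or.inl (Or.inr ⟨(ρ, c), rfl⟩))
  · exact Or.inl (Or.inr ⟨(ρ, μ, a, b), rfl⟩)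
  · exact Or.inr ⟨(μ₁, μ₂, ρ), rfl⟩

/-- The grammar for `S₁`. -/
noncomputable def G1 [Fintype α] : ContextFreeGrammar (T1 A) :=
  ⟨NTt A, none, (rules1_finite A rep).toFinset⟩

lemma mem_G1_rules [Fintype α] (r : ContextFreeRule (T1 A) (NTt A)) :
    r ∈ (G1 A rep).rules ↔ r ∈ Rules1 A rep :=
  Set.Finite.mem_toFinset _

/-- Semantics of the grammar for `S₁`. -/
def Sem1 : NTt A → Set (List (T1 A))
  | none => sigma1 A rep '' {w | WellMatched pa w ∧ w ≠ []}
  | some (false, μ, ρ) =>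
      {x | ∃ w, WellMatched pa w ∧ phiVPA A w = μ ∧ x = (outF A rep ρ w).map Sum.inr}
  | some (true, μ, ρ) =>
      {x | ∃ w, WellMatched pa w ∧ w ≠ [] ∧ phiVPA A w = μ ∧
        x = ((outF A rep ρ w).tail).map Sum.inr}

end St18
namespace St18

variable {α : Type} {pa : α → VPKind} (A : VPA α pa)
variable (rep : List A.Γ × A.Q → List A.Γ × A.Q) [Fintype α]

lemma sem1_closed :
    ∀ r ∈ (G1 A rep).rules, ∀ x, strSem (Sem1 A rep) r.output x → x ∈ Sem1 A rep r.input := by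
  intro r hr x hx
  replace hr := (mem_G1_rules A rep r).1 hr
  rcases hr with ⟨μ, rfl⟩ | ⟨ρ, rfl⟩ | ⟨μ₁, μ₂, ρ, rfl⟩ | ⟨ρ, c, hc, rfl⟩ |
    ⟨ρ, μ, a, b, ha, hb, rfl⟩ | ⟨ρ, c, hc, rfl⟩ | ⟨ρ, μ, a, b, ha, hb, rfl⟩ | ⟨μ₁, μ₂, ρ, rfl⟩
  · rw [strSem_pair] at hx
    obtain ⟨y, z, hy, hz, rfl⟩ := hx
    rw [show inSym (Sem1 A rep) (Symbol.terminal (Sum.inl μ : T1 A)) y =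
      (y = [Sum.inl μ]) from rfl] at hy
    subst hy
    obtain ⟨w, hw, hne, hφ, rfl⟩ := hz
    refine ⟨w, ⟨hw, hne⟩, ?_⟩
    rw [sigma1_eq A rep hw, hφ]
    rfl
  · rw [strSem_nil_iff] at hx
    subst hx
    exact ⟨[], WellMatched.nil, phi_nil A, rfl⟩
  · rw [strSem_pair] at hx
    obtain ⟨y, z, hy, hz, rfl⟩ := hx
    obtain ⟨w₁, hw₁, hφ₁, rfl⟩ := hy
    obtain ⟨w₂, hw₂, hφ₂, rfl⟩ := hz
    refine ⟨w₁ ++ w₂, WellMatched.append hw₁ hw₂, ?_, ?_⟩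
    · rw [phi_append_desc A (wm_desc hw₁), hφ₁, hφ₂]
    · rw [outF_append A rep (wm_desc hw₁), hφ₂, List.map_append]
  · rw [strSem_single] at hx
    rw [show inSym (Sem1 A rep)
      (Symbol.terminal (Sum.inr (fOf A rep (ρ (phiVPA A [c] A.q₀))) : T1 A)) x =
      (x = [Sum.inr (fOf A rep (ρ (phiVPA A [c] A.q₀)))]) from rfl] at hx
    subst hx
    exact ⟨[c], WellMatched.intern c hc, rfl, rfl⟩
  · rw [strSem_triple] at hx
    obtain ⟨y, z, u, hy, hz, hu, rfl⟩ := hx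
    rw [show inSym (Sem1 A rep)
      (Symbol.terminal (Sum.inr (fOf A rep (ρ (wrapT A a μ b A.q₀))) : T1 A)) y =
      (y = [Sum.inr (fOf A rep (ρ (wrapT A a μ b A.q₀)))]) from rfl] at hy
    rw [show inSym (Sem1 A rep)
      (Symbol.terminal (Sum.inr (fOf A rep (ρ (retT A b A.q₀))) : T1 A)) u =
      (u = [Sum.inr (fOf A rep (ρ (retT A b A.q₀)))]) from rfl] at hu
    subst hy; subst hu
    obtain ⟨m, hm, hφm, rfl⟩ := hz
    refine ⟨a :: (m ++ [b]), WellMatched.wrap hm ha hb, ?_, ?_⟩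
    · rw [phi_wrap A ha hb hm, hφm]
    · rw [outF_wrap A rep ha hb hm, hφm]
      simp
  · rw [strSem_nil_iff] at hx
    subst hx
    exact ⟨[c], WellMatched.intern c hc, by simp, rfl, rfl⟩
  · rw [strSem_pair] at hx
    obtain ⟨y, z, hy, hz, rfl⟩ := hx
    rw [show inSym (Sem1 A rep)
      (Symbol.terminal (Sum.inr (fOf A rep (ρ (retT A b A.q₀))) : T1 A)) z =
      (z = [Sum.inr (fOf A rep (ρ (retT A b A.q₀)))]) from rfl] at hz
    subst hz
    obtain ⟨m, hm, hφm, rfl⟩ := hy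
    refine ⟨a :: (m ++ [b]), WellMatched.wrap hm ha hb, by simp, ?_, ?_⟩
    · rw [phi_wrap A ha hb hm, hφm]
    · rw [outF_wrap A rep ha hb hm, hφm]
      simp
  · rw [strSem_pair] at hx
    obtain ⟨y, z, hy, hz, rfl⟩ := hx
    obtain ⟨w₁, hw₁, hne₁, hφ₁, rfl⟩ := hy
    obtain ⟨w₂, hw₂, hφ₂, rfl⟩ := hz
    refine ⟨w₁ ++ w₂, WellMatched.append hw₁ hw₂, by simp [hne₁], ?_, ?_⟩
    · rw [phi_append_desc A (wm_desc hw₁), hφ₁, hφ₂]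
    · rw [outF_tail_append A rep (wm_desc hw₁) hne₁, hφ₂, List.map_append]

lemma produces1 {r : ContextFreeRule (T1 A) (NTt A)} (hr : r ∈ Rules1 A rep) :
    (G1 A rep).Produces [Symbol.nonterminal r.input] r.output :=
  ⟨r, (mem_G1_rules A rep r).2 hr, ContextFreeRule.Rewrites.input_output⟩

lemma derive_Mfull {m : List α} (hm : WellMatched pa m) :
    ∀ ρ : A.Q → A.Q,
      (G1 A rep).Derives [Symbol.nonterminal (some (false, phiVPA A m, ρ))]
        (((outF A rep ρ m).map Sum.inr).map Symbol.terminal) := by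
  induction hm with
  | nil =>
    intro ρ
    rw [phi_nil A]
    exact (produces1 A rep (r := ⟨some (false, id, ρ), []⟩)
      (Or.inr (Or.inl ⟨ρ, rfl⟩))).single
  | intern c hc =>
    intro ρ
    exact (produces1 A rep
      (r := ⟨some (false, phiVPA A [c], ρ),
        [Symbol.terminal (Sum.inr (fOf A rep (ρ (phiVPA A [c] A.q₀))))]⟩)
      (Or.inr (Or.inr (Or.inr (Or.inl ⟨ρ, c, hc, rfl⟩))))).single
  | @append u v hu hv ihu ihv =>
    intro ρ
    rw [phi_append_desc A (wm_desc hu)]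
    have step := produces1 A rep
      (r := ⟨some (false, phiVPA A v ∘ phiVPA A u, ρ),
        [Symbol.nonterminal (some (false, phiVPA A u, ρ ∘ phiVPA A v)),
         Symbol.nonterminal (some (false, phiVPA A v, ρ))]⟩)
      (Or.inr (Or.inr (Or.inl ⟨phiVPA A u, phiVPA A v, ρ, rfl⟩)))
    refine step.trans_derives ?_
    rw [outF_append A rep (wm_desc hu), List.map_append, List.map_append]
    have d1 := (ihu (ρ ∘ phiVPA A v)).append_right
      [Symbol.nonterminal (some (false, phiVPA A v, ρ))]
    have d2 := (ihv ρ).append_left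
      (((outF A rep (ρ ∘ phiVPA A v) u).map Sum.inr).map Symbol.terminal)
    exact d1.trans d2
  | @wrap m a b hm' ha hb ihm =>
    intro ρ
    rw [phi_wrap A ha hb hm']
    have step := produces1 A rep
      (r := ⟨some (false, wrapT A a (phiVPA A m) b, ρ),
        [Symbol.terminal (Sum.inr (fOf A rep (ρ (wrapT A a (phiVPA A m) b A.q₀)))),
         Symbol.nonterminal (some (false, phiVPA A m, ρ ∘ retT A b)),
         Symbol.terminal (Sum.inr (fOf A rep (ρ (retT A b A.q₀))))]⟩)
      (Or.inr (Or.inr (Or.inr (Or.inr (Or.inl ⟨ρ, phiVPA A m, a, b, ha, hb, rfl⟩)))))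
    refine step.trans_derives ?_
    rw [outF_wrap A rep ha hb hm']
    have d := ihm (ρ ∘ retT A b)
    have d2 := (d.append_right
      [Symbol.terminal (Sum.inr (fOf A rep (ρ (retT A b A.q₀))) : T1 A)]).append_left
      [Symbol.terminal (Sum.inr (fOf A rep (ρ (wrapT A a (phiVPA A m) b A.q₀))) : T1 A)]
    simp at d2 ⊢; exact d2

lemma derive_K {m : List α} (hm : WellMatched pa m) :
    ∀ ρ : A.Q → A.Q, m ≠ [] →
      (G1 A rep).Derives [Symbol.nonterminal (some (true, phiVPA A m, ρ))]
        ((((outF A rep ρ m).tail).map Sum.inr).map Symbol.terminal) := by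
  induction hm with
  | nil => intro ρ h; exact absurd rfl h
  | intern c hc =>
    intro ρ _
    exact (produces1 A rep (r := ⟨some (true, phiVPA A [c], ρ), []⟩)
      (Or.inr (Or.inr (Or.inr (Or.inr (Or.inr (Or.inl ⟨ρ, c, hc, rfl⟩))))))).single
  | @append u v hu hv ihu ihv =>
    intro ρ hne
    by_cases hu0 : u = []
    · subst hu0
      rw [List.nil_append] at hne ⊢
      exact ihv ρ hne
    · rw [phi_append_desc A (wm_desc hu)]
      have step := produces1 A rep
        (r := ⟨some (true, phiVPA A v ∘ phiVPA A u, ρ),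
          [Symbol.nonterminal (some (true, phiVPA A u, ρ ∘ phiVPA A v)),
           Symbol.nonterminal (some (false, phiVPA A v, ρ))]⟩)
        (Or.inr (Or.inr (Or.inr (Or.inr (Or.inr (Or.inr (Or.inr
          ⟨phiVPA A u, phiVPA A v, ρ, rfl⟩)))))))
      refine step.trans_derives ?_
      rw [outF_tail_append A rep (wm_desc hu) hu0, List.map_append, List.map_append]
      have d1 := (ihu (ρ ∘ phiVPA A v) hu0).append_right
        [Symbol.nonterminal (some (false, phiVPA A v, ρ))]
      have d2 := (derive_Mfull A rep hv ρ).append_left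
        ((((outF A rep (ρ ∘ phiVPA A v) u).tail).map Sum.inr).map Symbol.terminal)
      exact d1.trans d2
  | @wrap m a b hm' ha hb ihm =>
    intro ρ _
    rw [phi_wrap A ha hb hm']
    have step := produces1 A rep
      (r := ⟨some (true, wrapT A a (phiVPA A m) b, ρ),
        [Symbol.nonterminal (some (false, phiVPA A m, ρ ∘ retT A b)),
         Symbol.terminal (Sum.inr (fOf A rep (ρ (retT A b A.q₀))))]⟩)
      (Or.inr (Or.inr (Or.inr (Or.inr (Or.inr (Or.inr (Or.inl
        ⟨ρ, phiVPA A m, a, b, ha, hb, rfl⟩)))))))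
    refine step.trans_derives ?_
    rw [outF_wrap A rep ha hb hm']
    have d := (derive_Mfull A rep hm' (ρ ∘ retT A b)).append_right
      [Symbol.terminal (Sum.inr (fOf A rep (ρ (retT A b A.q₀))) : T1 A)]
    simp at d ⊢; exact d

lemma G1_lang : (G1 A rep).language = sigma1 A rep '' {w | WellMatched pa w ∧ w ≠ []} := by
  refine language_eq_sem (G1 A rep) (Sem1 A rep) (sem1_closed A rep) ?_
  rintro x ⟨w, ⟨hw, hne⟩, rfl⟩
  rw [sigma1_eq A rep hw]
  have step := produces1 A rep
    (r := ⟨none, [Symbol.terminal (Sum.inl (phiVPA A w) : T1 A),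
      Symbol.nonterminal (some (true, phiVPA A w, id))]⟩)
    (Or.inl ⟨phiVPA A w, rfl⟩)
  refine step.trans_derives ?_
  have d := (derive_K A rep hw id hne).append_left
    [Symbol.terminal (Sum.inl (phiVPA A w) : T1 A)]
  simp at d ⊢; exact d

end St18
/-- with `ν_A, σ₀, σ₁` defined via length-lexicographically
minimal representative configurations, the languages `S₀ = σ₀(D)` and
`S₁ = σ₁(W∖{ε})` are context-free. -/
theorem statement18 {α : Type} [Fintype α] {pa : α → VPKind} (A : VPA α pa)
    (ltQ : LinearOrder A.Q) (ltΓ : LinearOrder A.Γ)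
    (rep : List A.Γ × A.Q → List A.Γ × A.Q)
    (hrep : IsRepFun A ltQ ltΓ rep) :
    Language.IsContextFree ((sigma0 A rep '' {w | Descending pa w} : Set (List A.Q)) : Language A.Q) ∧
    Language.IsContextFree ((sigma1 A rep '' {w | WellMatched pa w ∧ w ≠ []} :
      Set (List ((A.Q → A.Q) ⊕ A.Q))) : Language ((A.Q → A.Q) ⊕ A.Q)) := by
  constructor
  · exact ⟨St18.G0 A rep, St18.G0_lang A rep⟩
  · exact ⟨St18.G1 A rep, St18.G1_lang A rep⟩
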